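/- Let t be a binary search tree and let x and y be keys occupying adjacent positions in the in-order traversal of t. If the depth of x in t is strictly less than the depth of y in t, then x is an ancestor of y in t. -/
import Mathlib


/-- Binary trees over a type `α`. -/
inductive BTree (α : Type*) where
  | nil : BTree α
  | node (l : BTree α) (a : α) (r : BTree α) : BTree α
  deriving DecidableEq

namespace BTree

variable {α : Type*}

/-- In-order traversal. -/
def inorder : BTree α → List α
  | nil => []
  | node l a r => inorder l ++ [a] ++ inorder r

/-- Key membership in a tree. -/
def Mem : BTree α → α → Prop
  | nil, _ => False
  | node l a r, x => Mem l x ∨ x = a ∨ Mem r x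

/-- `IsSubtree s t` means `s` occurs as a subtree of `t`. -/
inductive IsSubtree : BTree α → BTree α → Prop
  | refl (t : BTree α) : IsSubtree t t
  | left {s l r : BTree α} {a : α} : IsSubtree s l → IsSubtree s (node l a r)
  | right {s l r : BTree α} {a : α} : IsSubtree s r → IsSubtree s (node l a r)

/-- `x` and `y` occupy adjacent positions in the list `L` (`x` immediately before `y`). -/
def Adjacent (L : List α) (x y : α) : Prop :=
  ∃ i : ℕ, L[i]? = some x ∧ L[i + 1]? = some y

variable [LinearOrder α]

/-- The binary-search-tree property: at every node, all keys of the left subtree are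
smaller than the root key and all keys of the right subtree are larger. -/
def IsBST : BTree α → Prop
  | nil => True
  | node l a r => (∀ x, Mem l x → x < a) ∧ (∀ x, Mem r x → a < x) ∧ IsBST l ∧ IsBST r

/-- `Ancestor t x y`: the key `x` is an ancestor of the key `y` in `t`, i.e. `y` occurs
in a proper subtree of the subtree of `t` rooted at `x`. -/
def Ancestor (t : BTree α) (x y : α) : Prop :=
  ∃ l r : BTree α, IsSubtree (node l x r) t ∧ (Mem l y ∨ Mem r y)

/-- Depth (number of edges from the root) of a key in a binary search tree,
computed by the standard search path. -/
def depth : BTree α → α → ℕ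
  | nil, _ => 0
  | node l a r, x => if x = a then 0 else if x < a then depth l x + 1 else depth r x + 1

theorem mem_inorder {t : BTree α} {z : α} : Mem t z ↔ z ∈ inorder t := by
  induction t with
  | nil => simp [Mem, inorder]
  | node l a r ihl ihr => simp only [Mem, inorder, ihl, ihr, List.mem_append, List.mem_singleton]; tauto

/-- of two keys adjacent in the in-order traversal of a BST, the shallower
one is an ancestor of the deeper one. -/
theorem ancestor_of_adjacent_of_depth_lt (t : BTree α) (ht : IsBST t) (x y : α)
    (hadj : Adjacent (inorder t) x y) (hd : depth t x < depth t y) :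
    Ancestor t x y := by
  revert ht hadj hd
  induction t with
  | nil =>
    intro _ hadj _
    obtain ⟨i, hx, -⟩ := hadj
    simp [inorder] at hx
  | node l a r ihl ihr =>
    intro ht hadj hd
    obtain ⟨hla, hra, hbl, hbr⟩ := ht
    obtain ⟨i, hx, hy⟩ := hadj
    have hL : inorder (node l a r) = inorder l ++ a :: inorder r := by
      simp [inorder]
    rw [hL] at hx hy
    set n := (inorder l).length with hn
    rcases lt_trichotomy (i+1) n with h1 | h1 | h1
    · -- both in l
      have hx' : (inorder l)[i]? = some x := by
        rw [List.getElem?_append, if_pos (by omega)] at hx; exact hx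
      have hy' : (inorder l)[i+1]? = some y := by
        rw [List.getElem?_append, if_pos (by omega)] at hy; exact hy
      have hmx : Mem l x := mem_inorder.mpr (List.mem_iff_getElem?.mpr ⟨i, hx'⟩)
      have hmy : Mem l y := mem_inorder.mpr (List.mem_iff_getElem?.mpr ⟨i+1, hy'⟩)
      have dx : depth (node l a r) x = depth l x + 1 := by
        have h := hla x hmx; simp [depth, ne_of_lt h, h]
      have dy : depth (node l a r) y = depth l y + 1 := by
        have h := hla y hmy; simp [depth, ne_of_lt h, h]
      rw [dx, dy] at hd
      obtain ⟨L, R, hs, hm⟩ := ihl hbl ⟨i, hx', hy'⟩ (by omega)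
      exact ⟨L, R, IsSubtree.left hs, hm⟩
    · -- y = a
      have hya : y = a := by
        rw [h1, List.getElem?_append, if_neg (by omega), Nat.sub_self] at hy
        simp at hy; exact hy.symm
      have dy : depth (node l a r) y = 0 := by simp [depth, hya]
      omega
    · rcases eq_or_lt_of_le (show n ≤ i by omega) with h2 | h2
      · -- i = n : x = a
        have hxa : x = a := by
          rw [List.getElem?_append, if_neg (by omega), ← h2, Nat.sub_self] at hx
          simp at hx; exact hx.symm
        have hy' : (inorder r)[0]? = some y := by
          rw [List.getElem?_append, if_neg (by omega), show i + 1 - n = 1 by omega] at hy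
          simpa using hy
        have hmy : Mem r y := mem_inorder.mpr (List.mem_iff_getElem?.mpr ⟨0, hy'⟩)
        exact ⟨l, r, hxa ▸ IsSubtree.refl _, Or.inr hmy⟩
      · -- both in r
        have hx' : (inorder r)[i - n - 1]? = some x := by
          rw [List.getElem?_append, if_neg (by omega), show i - n = (i - n - 1) + 1 by omega] at hx
          simpa using hx
        have hy' : (inorder r)[(i - n - 1) + 1]? = some y := by
          rw [List.getElem?_append, if_neg (by omega), show i + 1 - n = (i - n - 1) + 1 + 1 by omega] at hy
          simpa using hy
        have hmx : Mem r x := mem_inorder.mpr (List.mem_iff_getElem?.mpr ⟨_, hx'⟩)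
        have hmy : Mem r y := mem_inorder.mpr (List.mem_iff_getElem?.mpr ⟨_, hy'⟩)
        have dx : depth (node l a r) x = depth r x + 1 := by
          have h := hra x hmx; simp [depth, (ne_of_gt h), not_lt_of_gt h]
        have dy : depth (node l a r) y = depth r y + 1 := by
          have h := hra y hmy; simp [depth, (ne_of_gt h), not_lt_of_gt h]
        rw [dx, dy] at hd
        obtain ⟨L, R, hs, hm⟩ := ihr hbr ⟨_, hx', hy'⟩ (by omega)
        exact ⟨L, R, IsSubtree.right hs, hm⟩

end BTree
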